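/- For all natural numbers b and n, the graph S_b □ H_n has queue-number at most 4. -/

import Mathlib

open SimpleGraph

/-- Two (unordered) pairs of vertices cross with respect to the strict order `lt`:
with `e = {v,w}`, `f = {x,y}`, `v ≺ w`, `x ≺ y`, they cross if
`v ≺ x ≺ w ≺ y` or `x ≺ v ≺ y ≺ w`. -/
def Cross {V : Type*} (lt : V → V → Prop) (e f : Sym2 V) : Prop :=
  ∃ v w x y : V, e = s(v, w) ∧ f = s(x, y) ∧
    ((lt v x ∧ lt x w ∧ lt w y) ∨ (lt x v ∧ lt v y ∧ lt y w))

/-- Two (unordered) pairs of vertices nest with respect to the strict order `lt`: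
with `e = {v,w}`, `f = {x,y}`, `v ≺ w`, `x ≺ y`, they nest if
`v ≺ x ≺ y ≺ w` or `x ≺ v ≺ w ≺ y`. -/
def Nest {V : Type*} (lt : V → V → Prop) (e f : Sym2 V) : Prop :=
  ∃ v w x y : V, e = s(v, w) ∧ f = s(x, y) ∧
    ((lt v x ∧ lt x y ∧ lt y w) ∨ (lt x v ∧ lt v w ∧ lt w y))

/-- `(lt, φ)` is a `k`-stack layout of `G`: `lt` is a linear (strict total) order on the
vertices and no two edges with the same colour cross. -/
def IsStackLayout {V : Type*} {k : ℕ} (G : SimpleGraph V)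
    (lt : V → V → Prop) (φ : Sym2 V → Fin k) : Prop :=
  IsStrictTotalOrder V lt ∧
    ∀ e ∈ G.edgeSet, ∀ f ∈ G.edgeSet, φ e = φ f → ¬ Cross lt e f

/-- `(lt, φ)` is a `k`-queue layout of `G`: `lt` is a linear (strict total) order on the
vertices and no two edges with the same colour nest. -/
def IsQueueLayout {V : Type*} {k : ℕ} (G : SimpleGraph V)
    (lt : V → V → Prop) (φ : Sym2 V → Fin k) : Prop :=
  IsStrictTotalOrder V lt ∧
    ∀ e ∈ G.edgeSet, ∀ f ∈ G.edgeSet, φ e = φ f → ¬ Nest lt e f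

/-- The stack-number of `G`: the least `k` such that `G` has a `k`-stack layout. -/
noncomputable def stackNumber {V : Type*} (G : SimpleGraph V) : ℕ :=
  sInf {k | ∃ (lt : V → V → Prop) (φ : Sym2 V → Fin k), IsStackLayout G lt φ}

/-- The queue-number of `G`: the least `k` such that `G` has a `k`-queue layout. -/
noncomputable def queueNumber {V : Type*} (G : SimpleGraph V) : ℕ :=
  sInf {k | ∃ (lt : V → V → Prop) (φ : Sym2 V → Fin k), IsQueueLayout G lt φ}

/-- A queue layout is strict if for every vertex `u` and neighbours `v, w` of `u` with
`u ≺ v ≺ w` or `v ≺ w ≺ u`, the edges `uv` and `uw` get different colours. -/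
def IsStrictQueueLayout {V : Type*} {k : ℕ} (G : SimpleGraph V)
    (lt : V → V → Prop) (φ : Sym2 V → Fin k) : Prop :=
  IsQueueLayout G lt φ ∧
    ∀ u v w : V, G.Adj u v → G.Adj u w →
      ((lt u v ∧ lt v w) ∨ (lt v w ∧ lt w u)) → φ s(u, v) ≠ φ s(u, w)

/-- The strict queue-number of `G`. -/
noncomputable def strictQueueNumber {V : Type*} (G : SimpleGraph V) : ℕ :=
  sInf {k | ∃ (lt : V → V → Prop) (φ : Sym2 V → Fin k), IsStrictQueueLayout G lt φ}

/-- A stack layout is dispersable if the colouring is a proper edge-colouring. -/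
def IsDispersableStackLayout {V : Type*} {k : ℕ} (G : SimpleGraph V)
    (lt : V → V → Prop) (φ : Sym2 V → Fin k) : Prop :=
  IsStackLayout G lt φ ∧
    ∀ u v w : V, G.Adj u v → G.Adj u w → v ≠ w → φ s(u, v) ≠ φ s(u, w)

/-- The dispersable stack-number of `G`. -/
noncomputable def dispersableStackNumber {V : Type*} (G : SimpleGraph V) : ℕ :=
  sInf {k | ∃ (lt : V → V → Prop) (φ : Sym2 V → Fin k), IsDispersableStackLayout G lt φ}

/-- The star `S_b` with root `none` and leaves `some i`, `i : Fin b`. -/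
def starGraphOpt (b : ℕ) : SimpleGraph (Option (Fin b)) :=
  SimpleGraph.fromRel (fun v w => v = none ∧ w ≠ none)

/-- The triangulated grid `H_n` on vertex set `Fin n × Fin n` (0-indexed), with horizontal
edges `(x,y)(x+1,y)`, vertical edges `(x,y)(x,y+1)` and diagonal edges `(x,y)(x+1,y+1)`. -/
def triGrid (n : ℕ) : SimpleGraph (Fin n × Fin n) :=
  SimpleGraph.fromRel (fun p q =>
    ((p.1 : ℕ) + 1 = (q.1 : ℕ) ∧ p.2 = q.2) ∨
    (p.1 = q.1 ∧ (p.2 : ℕ) + 1 = (q.2 : ℕ)) ∨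
    ((p.1 : ℕ) + 1 = (q.1 : ℕ) ∧ (p.2 : ℕ) + 1 = (q.2 : ℕ)))

namespace Stmt2Aux

def enc {b : ℕ} : Option (Fin b) → ℕ
  | none => 0
  | some i => i + 1

lemma enc_lt {b : ℕ} (a : Option (Fin b)) : enc a < b + 1 := by
  cases a with
  | none => simp [enc]
  | some i => exact Nat.succ_lt_succ i.isLt

lemma enc_inj {b : ℕ} {a a' : Option (Fin b)} (h : enc a = enc a') : a = a' := by
  cases a <;> cases a' <;> simp_all [enc]
  exact Fin.ext h

def L (n : ℕ) (p : Fin n × Fin n) : ℕ := (p.2 : ℕ) * n + (p.1 : ℕ)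

lemma L_inj {n : ℕ} {p q : Fin n × Fin n} (h : L n p = L n q) : p = q := by
  have hn : 0 < n := p.1.pos
  have h1 : (p.1 : ℕ) = (q.1 : ℕ) := by
    have e1 : L n p % n = (p.1 : ℕ) := by
      unfold L; rw [Nat.mul_comm, Nat.mul_add_mod, Nat.mod_eq_of_lt p.1.isLt]
    have e2 : L n q % n = (q.1 : ℕ) := by
      unfold L; rw [Nat.mul_comm, Nat.mul_add_mod, Nat.mod_eq_of_lt q.1.isLt]
    rw [← e1, ← e2, h]
  have h2 : (p.2 : ℕ) = (q.2 : ℕ) := by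
    have : (p.2 : ℕ) * n = (q.2 : ℕ) * n := by unfold L at h; omega
    exact Nat.eq_of_mul_eq_mul_right hn this
  exact Prod.ext (Fin.ext h1) (Fin.ext h2)

def pos (b n : ℕ) (u : Option (Fin b) × Fin n × Fin n) : ℕ :=
  L n u.2 * (b + 1) + enc u.1

lemma pos_inj {b n : ℕ} {u v : Option (Fin b) × Fin n × Fin n}
    (h : pos b n u = pos b n v) : u = v := by
  have hB : 0 < b + 1 := Nat.succ_pos b
  have e1 : enc u.1 = enc v.1 := by
    have m1 : pos b n u % (b + 1) = enc u.1 := by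
      unfold pos; rw [Nat.mul_comm, Nat.mul_add_mod, Nat.mod_eq_of_lt (enc_lt u.1)]
    have m2 : pos b n v % (b + 1) = enc v.1 := by
      unfold pos; rw [Nat.mul_comm, Nat.mul_add_mod, Nat.mod_eq_of_lt (enc_lt v.1)]
    rw [← m1, ← m2, h]
  have e2 : L n u.2 = L n v.2 := by
    have : L n u.2 * (b + 1) = L n v.2 * (b + 1) := by unfold pos at h; omega
    exact Nat.eq_of_mul_eq_mul_right hB this
  exact Prod.ext (enc_inj e1) (L_inj e2)

def gcol {n : ℕ} (p q : Fin n × Fin n) : Fin 4 :=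
  if p.2 = q.2 then 1 else if p.1 = q.1 then 2 else 3

def col (b n : ℕ) (u v : Option (Fin b) × Fin n × Fin n) : Fin 4 :=
  if u.1 = v.1 then gcol u.2 v.2 else 0

lemma col_symm (b n : ℕ) (u v : Option (Fin b) × Fin n × Fin n) :
    col b n u v = col b n v u := by
  unfold col gcol
  by_cases h1 : u.1 = v.1 <;> by_cases h2 : u.2.2 = v.2.2 <;>
    by_cases h3 : u.2.1 = v.2.1 <;>
    simp [h1, h2, h3, Ne.symm, eq_comm]

lemma gcol_ne_zero {n : ℕ} (p q : Fin n × Fin n) : gcol p q ≠ 0 := by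
  unfold gcol; split_ifs <;> decide

def dval (n : ℕ) (c : Fin 4) : ℕ := if c = 1 then 1 else if c = 2 then n else n + 1

lemma dval_pos {n : ℕ} (hn : 0 < n) (c : Fin 4) : 0 < dval n c := by
  unfold dval; split_ifs <;> omega

lemma grid_span {n : ℕ} {p q : Fin n × Fin n} (h : (triGrid n).Adj p q) :
    L n q = L n p + dval n (gcol p q) ∨ L n p = L n q + dval n (gcol p q) := by
  rw [triGrid, SimpleGraph.fromRel_adj] at h
  obtain ⟨hne, h | h⟩ := h
  · left
    rcases h with ⟨h1, h2⟩ | ⟨h1, h2⟩ | ⟨h1, h2⟩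
    · have : gcol p q = 1 := by simp [gcol, h2]
      rw [this]; unfold dval L; rw [h2]; simp; omega
    · have hy : p.2 ≠ q.2 := fun e => by rw [e] at h2; omega
      have : gcol p q = 2 := by simp [gcol, hy, h1]
      rw [this]; unfold dval L; rw [h1]
      have : (q.2 : ℕ) * n = (p.2 : ℕ) * n + n := by
        have := add_mul ((p.2 : ℕ)) 1 n
        rw [← h2]; omega
      simp; omega
    · have hy : p.2 ≠ q.2 := fun e => by rw [e] at h2; omega
      have hx : p.1 ≠ q.1 := fun e => by rw [e] at h1; omega
      have : gcol p q = 3 := by simp [gcol, hy, hx]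
      rw [this]; unfold dval L
      have : (q.2 : ℕ) * n = (p.2 : ℕ) * n + n := by
        have := add_mul ((p.2 : ℕ)) 1 n
        rw [← h2]; omega
      simp; omega
  · right
    rcases h with ⟨h1, h2⟩ | ⟨h1, h2⟩ | ⟨h1, h2⟩
    · have : gcol p q = 1 := by simp [gcol, h2.symm]
      rw [this]; unfold dval L; rw [h2]; simp; omega
    · have hy : p.2 ≠ q.2 := fun e => by rw [e] at h2; omega
      have : gcol p q = 2 := by simp [gcol, hy, h1.symm]
      rw [this]; unfold dval L; rw [h1]
      have : (p.2 : ℕ) * n = (q.2 : ℕ) * n + n := by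
        have := add_mul ((q.2 : ℕ)) 1 n
        rw [← h2]; omega
      simp; omega
    · have hy : p.2 ≠ q.2 := fun e => by rw [e] at h2; omega
      have hx : p.1 ≠ q.1 := fun e => by rw [e] at h1; omega
      have : gcol p q = 3 := by simp [gcol, hy, hx]
      rw [this]; unfold dval L
      have : (p.2 : ℕ) * n = (q.2 : ℕ) * n + n := by
        have := add_mul ((q.2 : ℕ)) 1 n
        rw [← h2]; omega
      simp; omega

lemma key {b n : ℕ} {v w x y : Option (Fin b) × Fin n × Fin n}
    (hvw : (starGraphOpt b □ triGrid n).Adj v w)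
    (hxy : (starGraphOpt b □ triGrid n).Adj x y)
    (hc : col b n v w = col b n x y)
    (h1 : pos b n v < pos b n x) (h2 : pos b n x < pos b n y)
    (h3 : pos b n y < pos b n w) : False := by
  have hn : 0 < n := v.2.1.pos
  rw [SimpleGraph.boxProd_adj] at hvw hxy
  rcases hvw with ⟨hvs, hv2⟩ | ⟨hvg, hv1⟩
  · -- e is a star edge
    have hvne : v.1 ≠ w.1 := hvs.ne
    have hcol0 : col b n v w = 0 := by simp [col, hvne]
    rcases hxy with ⟨hxs, hx2⟩ | ⟨hxg, hx1⟩
    · -- f is a star edge too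
      have hxnone : x.1 = none ∨ y.1 = none := by
        rw [starGraphOpt, SimpleGraph.fromRel_adj] at hxs
        rcases hxs.2 with ⟨h, _⟩ | ⟨h, _⟩
        · exact Or.inl h
        · exact Or.inr h
      set B := b + 1 with hBdef
      set k := L n v.2 with hk
      set m := L n x.2 with hm
      have hpw : pos b n w = k * B + enc w.1 := by
        simp [pos, ← hv2, hk, hBdef]
      have hpwlt : pos b n w < k * B + B := by
        rw [hpw]; exact Nat.add_lt_add_left (enc_lt w.1) _
      have hpvge : k * B ≤ pos b n v := by
        simp [pos, hk, hBdef]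
      have hkm : ∀ t : Option (Fin b) × Fin n × Fin n,
          pos b n t = m * B → k * B < pos b n t → pos b n t < k * B + B → False := by
        intro t htp hlo hhi
        have hmk : k < m := by
          have : k * B < m * B := by omega
          exact lt_of_mul_lt_mul_right this (Nat.zero_le B)
        have : (k + 1) * B ≤ m * B := Nat.mul_le_mul_right B (by omega)
        rw [add_mul, one_mul] at this
        omega
      rcases hxnone with hx0 | hy0
      · have hpx : pos b n x = m * B := by simp [pos, hm, hx0, enc, hBdef]
        exact hkm x hpx (by omega) (by omega)
      · have hpy : pos b n y = m * B := by
          simp [pos, hm, ← hx2, hy0, enc, hBdef]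
        exact hkm y hpy (by omega) (by omega)
    · -- f is a grid edge: colours differ
      have : col b n x y = gcol x.2 y.2 := by simp [col, hx1]
      rw [hcol0, this] at hc
      exact gcol_ne_zero x.2 y.2 hc.symm
  · -- e is a grid edge
    rcases hxy with ⟨hxs, hx2⟩ | ⟨hxg, hx1⟩
    · have hxne : x.1 ≠ y.1 := hxs.ne
      have : col b n v w = gcol v.2 w.2 := by simp [col, hv1]
      have h0 : col b n x y = 0 := by simp [col, hxne]
      rw [this, h0] at hc
      exact gcol_ne_zero v.2 w.2 hc
    · -- both grid edges
      have hcv : col b n v w = gcol v.2 w.2 := by simp [col, hv1]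
      have hcx : col b n x y = gcol x.2 y.2 := by simp [col, hx1]
      have hgc : gcol v.2 w.2 = gcol x.2 y.2 := by rw [← hcv, ← hcx, hc]
      set d := dval n (gcol v.2 w.2) with hd
      have hdpos : 0 < d := dval_pos hn _
      have hsv := grid_span hvg
      have hsx := grid_span hxg
      rw [← hgc] at hsx
      have hvw' : pos b n w = pos b n v + d * (b + 1) := by
        rcases hsv with h | h
        · simp [pos, h, ← hv1, add_mul]; ring
        · exfalso
          have : pos b n v = pos b n w + d * (b + 1) := by
            simp [pos, h, hv1, add_mul]; ring
          have hB : 0 < d * (b + 1) := Nat.mul_pos hdpos (Nat.succ_pos b)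
          omega
      have hxy' : pos b n y = pos b n x + d * (b + 1) := by
        rcases hsx with h | h
        · simp [pos, h, ← hx1, add_mul]; ring
        · exfalso
          have : pos b n x = pos b n y + d * (b + 1) := by
            simp [pos, h, hx1, add_mul]; ring
          have hB : 0 < d * (b + 1) := Nat.mul_pos hdpos (Nat.succ_pos b)
          omega
      omega

end Stmt2Aux

open Stmt2Aux in
/-- For all `b` and `n`, the graph `S_b □ H_n` has queue-number at most `4`. -/
theorem stmt2 (b n : ℕ) : queueNumber (starGraphOpt b □ triGrid n) ≤ 4 := by
  apply Nat.sInf_le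
  refine ⟨fun u v => pos b n u < pos b n v,
    Sym2.lift ⟨fun u v => col b n u v, col_symm b n⟩, ?_, ?_⟩
  · refine { trichotomous := ?_, irrefl := ?_, trans := ?_ }
    · intro a c
      rcases lt_trichotomy (pos b n a) (pos b n c) with h | h | h
      · exact fun h' _ => absurd h h'
      · exact fun _ _ => pos_inj h
      · exact fun _ h' => absurd h h'
    · intro a h; exact lt_irrefl _ h
    · intro a c e h1 h2; exact lt_trans h1 h2
  · intro e he f hf hcol hnest
    obtain ⟨v, w, x, y, he', hf', hcase⟩ := hnest
    rw [he'] at he; rw [hf'] at hf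
    rw [SimpleGraph.mem_edgeSet] at he hf
    rw [he', hf'] at hcol
    simp only [Sym2.lift_mk] at hcol
    rcases hcase with ⟨a1, a2, a3⟩ | ⟨a1, a2, a3⟩
    · exact key he hf hcol a1 a2 a3
    · exact key hf he hcol.symm a1 a2 a3
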